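/- If G is a connected graph of order n with maximum degree Δ(G) = n-3, then the power domination number of G is at most 2. -/

import Mathlib

open SimpleGraph

/-- `G.Obs S v` : vertex `v` eventually becomes monitored (black) when starting
from the set `S` and iteratively applying the zero-forcing propagation rule:
if a monitored vertex has exactly one unmonitored neighbor, that neighbor
becomes monitored. -/
inductive SimpleGraph.Obs {V : Type*} (G : SimpleGraph V) (S : Set V) : V → Prop
  | init {v : V} : v ∈ S → G.Obs S v
  | force {v w : V} : G.Obs S v → G.Adj v w →
      (∀ u, G.Adj v u → u ≠ w → G.Obs S u) → G.Obs S w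

/-- `S` is a zero forcing set of `G`. -/
def SimpleGraph.IsZeroForcingSet {V : Type*} (G : SimpleGraph V) (S : Set V) : Prop :=
  ∀ v, G.Obs S v

/-- The zero forcing number `Z(G)`. -/
noncomputable def SimpleGraph.zeroForcingNumber {V : Type*} (G : SimpleGraph V) : ℕ :=
  sInf {n | ∃ S : Set V, S.ncard = n ∧ G.IsZeroForcingSet S}

/-- The closed neighborhood `N[S]` of a set of vertices. -/
def SimpleGraph.closedNbhdSet {V : Type*} (G : SimpleGraph V) (S : Set V) : Set V :=
  S ∪ {w | ∃ v ∈ S, G.Adj v w}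

/-- `S` is a power dominating set of `G`: `N[S]` is a zero forcing set. -/
def SimpleGraph.IsPowerDominatingSet {V : Type*} (G : SimpleGraph V) (S : Set V) : Prop :=
  G.IsZeroForcingSet (G.closedNbhdSet S)

/-- The power domination number `γₚ(G)`. -/
noncomputable def SimpleGraph.powerDominationNumber {V : Type*} (G : SimpleGraph V) : ℕ :=
  sInf {n | ∃ S : Set V, S.ncard = n ∧ G.IsPowerDominatingSet S}

lemma aux_force {V : Type*} (G : SimpleGraph V) (hconn : G.Connected) {M : Set V}
    (hne : M.Nonempty) (hss : Mᶜ.Subsingleton) : G.IsZeroForcingSet M := by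
  intro w
  by_cases hw : w ∈ M
  · exact Obs.init hw
  · obtain ⟨m, hm⟩ := hne
    have hwm : w ≠ m := fun h => hw (h ▸ hm)
    obtain ⟨p⟩ := hconn.preconnected w m
    cases p with
    | nil => exact absurd rfl hwm
    | cons h q =>
      rename_i b
      have hb : b ∈ M := by
        by_contra hbM
        exact h.ne' (hss hbM hw)
      refine Obs.force (Obs.init hb) h.symm (fun u hu huw => ?_)
      refine Obs.init ?_
      by_contra huM
      exact huw (hss huM hw)

theorem stmt2 {V : Type*} [Fintype V] (G : SimpleGraph V) [DecidableRel G.Adj]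
    (hconn : G.Connected) (hΔ : G.maxDegree = Fintype.card V - 3) :
    G.powerDominationNumber ≤ 2 := by
  have hne : Nonempty V := hconn.nonempty
  obtain ⟨v, hv⟩ := G.exists_maximal_degree_vertex
  have hvS : v ∈ G.closedNbhdSet {v} := Or.inl rfl
  by_cases hcard : Fintype.card V ≤ 3
  · have hsub : (G.closedNbhdSet {v})ᶜ.Subsingleton := by
      intro a ha b hb
      by_cases h1 : Fintype.card V = 1
      · have : Subsingleton V := Fintype.card_le_one_iff_subsingleton.mp (le_of_eq h1)
        exact Subsingleton.elim a b
      · exfalso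
        have h0 : 0 < Fintype.card V := Fintype.card_pos
        have h2 : 2 ≤ Fintype.card V := by omega
        have : Nontrivial V := Fintype.one_lt_card_iff_nontrivial.mp h2
        obtain ⟨w, hw⟩ := exists_ne v
        obtain ⟨p⟩ := hconn.preconnected w v
        cases p with
        | nil => exact hw rfl
        | cons h q =>
          rename_i c
          have hdeg : 0 < G.degree w := G.degree_pos_iff_exists_adj w |>.mpr ⟨c, h⟩
          have := G.degree_le_maxDegree w
          omega
    have hpd : G.IsPowerDominatingSet {v} :=
      aux_force G hconn ⟨v, hvS⟩ hsub
    have h1 : (1 : ℕ) ∈ {n | ∃ S : Set V, S.ncard = n ∧ G.IsPowerDominatingSet S} :=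
      ⟨{v}, Set.ncard_singleton v, hpd⟩
    exact le_trans (Nat.sInf_le h1) one_le_two
  · -- card ≥ 4
    push_neg at hcard
    set n := Fintype.card V with hn
    -- closedNbhdSet {v} = insert v (neighborSet v)
    have hset : G.closedNbhdSet {v} = insert v (G.neighborSet v) := by
      ext x
      simp [SimpleGraph.closedNbhdSet, SimpleGraph.neighborSet, eq_comm]
    have hcount : (G.closedNbhdSet {v}).ncard = G.degree v + 1 := by
      rw [hset, Set.ncard_insert_of_notMem (by simp) (Set.toFinite _)]
      have : (G.neighborSet v).ncard = G.degree v := by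
        have : G.neighborSet v = ↑(G.neighborFinset v) := by
          simp [SimpleGraph.neighborFinset]
        rw [congrArg Set.ncard this, Set.ncard_coe_finset]
        rfl
      omega
    have hdegv : G.degree v = n - 3 := by rw [← hv, hΔ]
    have hcompl : ((G.closedNbhdSet {v})ᶜ).ncard = 2 := by
      have h := Set.ncard_add_ncard_compl (G.closedNbhdSet {v}) (Set.toFinite _) (Set.toFinite _)
      rw [Nat.card_eq_fintype_card] at h
      omega
    have hCne : ((G.closedNbhdSet {v})ᶜ).Nonempty := by
      rw [← Set.ncard_pos (Set.toFinite _)]; omega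
    obtain ⟨a, ha⟩ := hCne
    have hav : a ≠ v := fun h => ha (h ▸ hvS)
    -- S = {v, a}
    have hsubset : G.closedNbhdSet {v} ∪ {a} ⊆ G.closedNbhdSet {v, a} := by
      rintro x (hx | hx)
      · rcases hx with hx | hx
        · exact Or.inl (Or.inl hx)
        · obtain ⟨y, hy, hadj⟩ := hx
          exact Or.inr ⟨y, Or.inl hy, hadj⟩
      · exact Or.inl (Or.inr hx)
    have hsub2 : (G.closedNbhdSet {v, a})ᶜ ⊆ (G.closedNbhdSet {v})ᶜ \ {a} := by
      intro x hx
      constructor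
      · intro hxc; exact hx (hsubset (Or.inl hxc))
      · intro hxa; exact hx (hsubset (Or.inr hxa))
    have hss : ((G.closedNbhdSet {v, a})ᶜ).Subsingleton := by
      have hle : ((G.closedNbhdSet {v})ᶜ \ {a}).ncard ≤ 1 := by
        rw [Set.ncard_diff_singleton_of_mem ha]
        omega
      have hle2 := le_trans (Set.ncard_le_ncard hsub2 (Set.toFinite _)) hle
      intro x hx y hy
      exact Set.ncard_le_one_iff (Set.toFinite _) |>.mp hle2 hx hy
    have hpd : G.IsPowerDominatingSet {v, a} :=
      aux_force G hconn ⟨v, hsubset (Or.inl hvS)⟩ hss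
    have h2 : (2 : ℕ) ∈ {n | ∃ S : Set V, S.ncard = n ∧ G.IsPowerDominatingSet S} :=
      ⟨{v, a}, by rw [Set.ncard_pair hav.symm], hpd⟩
    exact Nat.sInf_le h2
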